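/- Under the hypotheses α ± β ∉ ℤ, ψ(b) ≠ 0, and φ|_{d_0 ⊗ ⟨b⟩} = 0, the highest weight vector v_φ of V(φ) satisfies (d_{-1} ⊗ b) · v_φ = 0. -/

import Mathlib

open Finsupp TensorProduct

noncomputable section

/-- Loop-Virasoro carrier: `Vir ⊗ B ≅ (⊕_{n∈ℤ} d_n ⊗ B) ⊕ (C ⊗ B)`. -/
abbrev LVir (B : Type*) [AddCommMonoid B] : Type _ := (ℤ →₀ B) × B

variable (B : Type*) [CommRing B] [Algebra ℂ B]

/-- `[d_m ⊗ a, d_n ⊗ b] = (n-m) d_{m+n} ⊗ ab + δ_{m,-n} ((m³-m)/12) C ⊗ ab`. -/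
def ldBracket (m n : ℤ) (a b : B) : LVir B :=
  (Finsupp.single (m + n) ((((n : ℂ) - (m : ℂ))) • (a * b)),
    (if m = -n then ((m : ℂ) ^ 3 - (m : ℂ)) / 12 else 0) • (a * b))

/-- The bracket of the loop-Virasoro algebra `Vir_B = Vir ⊗ B`; `C ⊗ B` is central. -/
def lvirBracket (x y : LVir B) : LVir B :=
  x.1.sum fun m a => y.1.sum fun n b => ldBracket B m n a b

/-- Action of `d_n` on `V_{α,β}` -/
def dAct (α β : ℂ) (n : ℤ) : Module.End ℂ (ℤ →₀ ℂ) :=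
  Finsupp.lsum ℂ fun k => (α + (k : ℂ) + (n : ℂ) * β) • Finsupp.lsingle (k + n)

/-- Action of `Vir_B` on `V_{α,β,ψ}`:  `(d_n ⊗ b) · v_k = ψ(b)(α + k + nβ) v_{k+n}`,
`(C ⊗ b) · v_k = 0`. -/
def lAction (α β : ℂ) (ψ : B →ₐ[ℂ] ℂ) : LVir B →ₗ[ℂ] Module.End ℂ (ℤ →₀ ℂ) :=
  (Finsupp.lsum ℂ fun n =>
      (LinearMap.toSpanSingleton ℂ (Module.End ℂ (ℤ →₀ ℂ)) (dAct α β n)).comp ψ.toLinearMap).comp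
    (LinearMap.fst ℂ (ℤ →₀ B) B)

def ActInvariant {L V : Type*} [AddCommGroup V] [Module ℂ V]
    (act : L → Module.End ℂ V) (U : Submodule ℂ V) : Prop :=
  ∀ x : L, ∀ v ∈ U, act x v ∈ U

def ActIrreducible {L V : Type*} [AddCommGroup V] [Module ℂ V]
    (act : L → Module.End ℂ V) : Prop :=
  ∀ U : Submodule ℂ V, ActInvariant act U → U = ⊥ ∨ U = ⊤

def ActGenerates {L V : Type*} [AddCommGroup V] [Module ℂ V]
    (act : L → Module.End ℂ V) (S : Set V) : Prop :=
  ∀ U : Submodule ℂ V, ActInvariant act U → S ⊆ U → U = ⊤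

/-- Data of the irreducible highest weight `Vir_B`-module `V(φ)` attached to a one-dimensional
representation `φ` of `Vir⁰_B` (given by its values `φd b = φ(d_0 ⊗ b)`, `φC b = φ(C ⊗ b)`),
with highest weight vector `hv = v_φ`. -/
structure HWRep (B : Type*) [CommRing B] [Algebra ℂ B]
    (W : Type*) [AddCommGroup W] [Module ℂ W] where
  ρ : LVir B →ₗ[ℂ] Module.End ℂ W
  rep : ∀ x y : LVir B, ρ (lvirBracket B x y) = ρ x * ρ y - ρ y * ρ x
  hv : W
  hv_ne : hv ≠ 0
  φd : B →ₗ[ℂ] ℂ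
  φC : B →ₗ[ℂ] ℂ
  hw : ∀ n : ℤ, 0 < n → ∀ b : B, ρ (Finsupp.single n b, 0) hv = 0
  wt0 : ∀ b : B, ρ (Finsupp.single 0 b, 0) hv = φd b • hv
  cen : ∀ b : B, ρ (0, b) hv = φC b • hv
  gen : ActGenerates (fun x => ρ x) {hv}
  irr : ActIrreducible (fun x => ρ x)

/-- The tensor product module `V^φ_{α,β,ψ} = V(φ) ⊗ V'_{α,β,ψ}`. -/
def tensAct {W : Type*} [AddCommGroup W] [Module ℂ W] (D : HWRep B W)
    (α β : ℂ) (ψ : B →ₐ[ℂ] ℂ) (x : LVir B) : Module.End ℂ (W ⊗[ℂ] (ℤ →₀ ℂ)) :=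
  TensorProduct.map (D.ρ x) LinearMap.id + TensorProduct.map LinearMap.id (lAction B α β ψ x)

section Aux

variable {B}
variable {W : Type*} [AddCommGroup W] [Module ℂ W]

/-- The operator of `d_n ⊗ a` on `W`. -/
def dop (D : HWRep B W) (n : ℤ) (a : B) : Module.End ℂ W := D.ρ (Finsupp.single n a, 0)

/-- The operator of `C ⊗ a` on `W`. -/
def cop (D : HWRep B W) (a : B) : Module.End ℂ W := D.ρ (0, a)

lemma dop_hv0 (D : HWRep B W) (a : B) : dop D 0 a D.hv = D.φd a • D.hv := D.wt0 a

lemma dop_hv_pos (D : HWRep B W) (k : ℤ) (hk : 0 < k) (a : B) : dop D k a D.hv = 0 :=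
  D.hw k hk a

lemma cop_hv (D : HWRep B W) (a : B) : cop D a D.hv = D.φC a • D.hv := D.cen a

lemma ldBracket_zero_left (m n : ℤ) (c : B) : ldBracket B m n 0 c = 0 := by
  simp [ldBracket, Prod.ext_iff]

lemma ldBracket_zero_right (m n : ℤ) (a : B) : ldBracket B m n a 0 = 0 := by
  simp [ldBracket, Prod.ext_iff]

lemma lvirBracket_single_single (m n : ℤ) (a c : B) :
    lvirBracket B (Finsupp.single m a, 0) (Finsupp.single n c, 0) = ldBracket B m n a c := by
  unfold lvirBracket
  dsimp only
  rw [Finsupp.sum_single_index (by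
    rw [Finsupp.sum_single_index (h := fun n' c' => ldBracket B m n' 0 c')
      (ldBracket_zero_right m n 0)]
    exact ldBracket_zero_left m n c)]
  exact Finsupp.sum_single_index (ldBracket_zero_right m n a)

lemma lvirBracket_cen_left (c : B) (y : LVir B) : lvirBracket B (0, c) y = 0 := by
  simp [lvirBracket]

lemma lvirBracket_single_cen (m : ℤ) (a c : B) :
    lvirBracket B (Finsupp.single m a, 0) (0, c) = 0 := by
  simp [lvirBracket]

lemma rho_ldBracket (D : HWRep B W) (m n : ℤ) (a c : B) :
    D.ρ (ldBracket B m n a c) =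
      ((n : ℂ) - (m : ℂ)) • dop D (m + n) (a * c) +
        (if m = -n then ((m : ℂ) ^ 3 - (m : ℂ)) / 12 else 0) • cop D (a * c) := by
  have h : (ldBracket B m n a c : LVir B) =
      ((n : ℂ) - (m : ℂ)) • ((Finsupp.single (m + n) (a * c) : ℤ →₀ B), (0 : B)) +
        (if m = -n then ((m : ℂ) ^ 3 - (m : ℂ)) / 12 else 0) • ((0 : ℤ →₀ B), a * c) := by
    unfold ldBracket
    simp only [Prod.smul_mk, Prod.mk_add_mk, smul_zero, add_zero, zero_add, Finsupp.smul_single]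
  rw [h, map_add, map_smul, map_smul]
  rfl

lemma comm_dd (D : HWRep B W) (m n : ℤ) (a c : B) (v : W) :
    dop D m a (dop D n c v) =
      dop D n c (dop D m a v) + ((n : ℂ) - (m : ℂ)) • dop D (m + n) (a * c) v +
        (if m = -n then ((m : ℂ) ^ 3 - (m : ℂ)) / 12 else 0) • cop D (a * c) v := by
  have h := D.rep (Finsupp.single m a, 0) (Finsupp.single n c, 0)
  rw [lvirBracket_single_single, rho_ldBracket] at h
  have h' := congrArg (fun (f : Module.End ℂ W) => f v) h
  simp only [LinearMap.add_apply, LinearMap.smul_apply, LinearMap.sub_apply,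
    Module.End.mul_apply] at h'
  have h2 : dop D m a (dop D n c v) =
      (((n : ℂ) - (m : ℂ)) • dop D (m + n) (a * c) v +
        (if m = -n then ((m : ℂ) ^ 3 - (m : ℂ)) / 12 else 0) • cop D (a * c) v) +
      dop D n c (dop D m a v) := sub_eq_iff_eq_add.mp h'.symm
  rw [h2]; abel

lemma comm_cop_d (D : HWRep B W) (n : ℤ) (a c : B) (v : W) :
    cop D c (dop D n a v) = dop D n a (cop D c v) := by
  have h := D.rep ((0 : ℤ →₀ B), c) (Finsupp.single n a, 0)
  rw [lvirBracket_cen_left, map_zero] at h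
  have h2 : D.ρ ((0 : ℤ →₀ B), c) * D.ρ (Finsupp.single n a, 0)
      = D.ρ (Finsupp.single n a, 0) * D.ρ ((0 : ℤ →₀ B), c) := by
    have := sub_eq_zero.mp h.symm
    exact this
  exact congrArg (fun (f : Module.End ℂ W) => f v) h2

lemma comm_cop_cop (D : HWRep B W) (a c : B) (v : W) :
    cop D c (cop D a v) = cop D a (cop D c v) := by
  have h := D.rep ((0 : ℤ →₀ B), c) ((0 : ℤ →₀ B), a)
  rw [lvirBracket_cen_left, map_zero] at h
  have h2 : D.ρ ((0 : ℤ →₀ B), c) * D.ρ ((0 : ℤ →₀ B), a)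
      = D.ρ ((0 : ℤ →₀ B), a) * D.ρ ((0 : ℤ →₀ B), c) := sub_eq_zero.mp h.symm
  exact congrArg (fun (f : Module.End ℂ W) => f v) h2

lemma comm_T (D : HWRep B W) (n : ℤ) (a : B) (v : W) :
    dop D 0 1 (dop D n a v) = dop D n a (dop D 0 1 v) + (n : ℂ) • dop D n a v := by
  have h := comm_dd D 0 n 1 a v
  have h0 : (if (0 : ℤ) = -n then ((((0 : ℤ) : ℂ)) ^ 3 - (((0 : ℤ) : ℂ))) / 12 else 0) = 0 := by
    norm_num
  rw [h0, zero_smul, add_zero] at h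
  simpa using h

/-- `(d_k ⊗ a)(d_{-1} ⊗ c) v_φ = 0` for `k > 0`, `c ∈ ⟨b⟩`. -/
lemma dpos_w (D : HWRep B W) {b : B} (hφ : ∀ a ∈ Ideal.span {b}, D.φd a = 0)
    (k : ℤ) (hk : 0 < k) (a : B) {c : B} (hc : c ∈ Ideal.span {b}) :
    dop D k a (dop D (-1) c D.hv) = 0 := by
  have h := comm_dd D k (-1) a c D.hv
  rw [dop_hv_pos D k hk a, map_zero, zero_add] at h
  by_cases hk1 : k = 1
  · subst hk1
    have e : (1 : ℤ) + -1 = 0 := by norm_num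
    rw [e] at h
    have e2 : dop D 0 (a * c) D.hv = 0 := by
      rw [dop_hv0, hφ (a * c) (Ideal.mul_mem_left _ a hc), zero_smul]
    rw [e2, smul_zero, zero_add] at h
    have e3 : (if (1 : ℤ) = -(-1) then (((1 : ℤ) : ℂ) ^ 3 - ((1 : ℤ) : ℂ)) / 12 else 0) = 0 := by
      norm_num
    rw [e3, zero_smul] at h
    exact h
  · have hk2 : 0 < k + -1 := by omega
    rw [dop_hv_pos D _ hk2, smul_zero, zero_add, if_neg (by omega : ¬ k = -(-1 : ℤ)), zero_smul] at h
    exact h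

lemma d0_w (D : HWRep B W) (a c : B) :
    dop D 0 a (dop D (-1) c D.hv) =
      D.φd a • dop D (-1) c D.hv - dop D (-1) (a * c) D.hv := by
  have h := comm_dd D 0 (-1) a c D.hv
  rw [dop_hv0, map_smul] at h
  have e : (0 : ℤ) + -1 = -1 := by norm_num
  rw [e] at h
  rw [if_neg (by norm_num : ¬ (0 : ℤ) = -(-1 : ℤ)), zero_smul, add_zero] at h
  rw [h]
  push_cast
  module

lemma cop_w (D : HWRep B W) (a c : B) :
    cop D a (dop D (-1) c D.hv) = D.φC a • dop D (-1) c D.hv := by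
  rw [comm_cop_d, cop_hv, map_smul]

/-- Monomials of negative-mode and central operators applied to `(d_{-1} ⊗ c) v_φ`, `c ∈ ⟨b⟩`,
together with their `d_0 ⊗ 1`-eigenvalue shift `m`. -/
inductive IsMon (D : HWRep B W) (b : B) : W → ℤ → Prop
  | base (c : B) (hc : c ∈ Ideal.span {b}) : IsMon D b (dop D (-1) c D.hv) (-1)
  | neg (n : ℤ) (hn : n < 0) (a : B) (u : W) (m : ℤ) (h : IsMon D b u m) :
      IsMon D b (dop D n a u) (m + n)
  | cen (a : B) (u : W) (m : ℤ) (h : IsMon D b u m) : IsMon D b (cop D a u) m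

lemma IsMon.m_neg {D : HWRep B W} {b : B} {u : W} {m : ℤ} (h : IsMon D b u m) : m < 0 := by
  induction h with
  | base c hc => norm_num
  | neg n hn a u m h ih => omega
  | cen a u m h ih => omega

lemma IsMon.eig {D : HWRep B W} {b : B} {u : W} {m : ℤ} (h : IsMon D b u m) :
    dop D 0 1 u = (D.φd 1 + (m : ℂ)) • u := by
  induction h with
  | base c hc =>
    rw [comm_T, dop_hv0, map_smul]
    push_cast
    module
  | neg n hn a u m h ih =>
    rw [comm_T, ih, map_smul]
    push_cast
    module
  | cen a u m h ih =>
    rw [← comm_cop_d, ih, map_smul]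

/-- The span of all monomial vectors. -/
def U0 (D : HWRep B W) (b : B) : Submodule ℂ W :=
  Submodule.span ℂ {u | ∃ m, IsMon D b u m}

lemma stable_neg (D : HWRep B W) (b : B) {n : ℤ} (hn : n < 0) (a₀ : B) :
    ∀ v ∈ U0 D b, dop D n a₀ v ∈ U0 D b := by
  have : U0 D b ≤ Submodule.comap (dop D n a₀) (U0 D b) := by
    rw [U0, Submodule.span_le]
    rintro u ⟨m, hu⟩
    exact Submodule.subset_span ⟨m + n, IsMon.neg n hn a₀ u m hu⟩
  exact fun v hv => this hv

lemma stable_cen (D : HWRep B W) (b : B) (a₀ : B) :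
    ∀ v ∈ U0 D b, cop D a₀ v ∈ U0 D b := by
  have : U0 D b ≤ Submodule.comap (cop D a₀) (U0 D b) := by
    rw [U0, Submodule.span_le]
    rintro u ⟨m, hu⟩
    exact Submodule.subset_span ⟨m, IsMon.cen a₀ u m hu⟩
  exact fun v hv => this hv

lemma mon_inv (D : HWRep B W) {b : B} (hφ : ∀ a ∈ Ideal.span {b}, D.φd a = 0)
    {u : W} {m : ℤ} (h : IsMon D b u m) :
    (∀ (k : ℤ) (a : B), dop D k a u ∈ U0 D b) ∧ (∀ a : B, cop D a u ∈ U0 D b) := by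
  induction h with
  | base c hc =>
    constructor
    · intro k a
      rcases lt_trichotomy k 0 with hk | hk | hk
      · exact Submodule.subset_span ⟨_, IsMon.neg k hk a _ _ (IsMon.base c hc)⟩
      · subst hk
        rw [d0_w]
        exact Submodule.sub_mem _
          (Submodule.smul_mem _ _ (Submodule.subset_span ⟨_, IsMon.base c hc⟩))
          (Submodule.subset_span ⟨_, IsMon.base (a * c) (Ideal.mul_mem_left _ a hc)⟩)
      · rw [dpos_w D hφ k hk a hc]
        exact Submodule.zero_mem _
    · intro a
      rw [cop_w]
      exact Submodule.smul_mem _ _ (Submodule.subset_span ⟨_, IsMon.base c hc⟩)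
  | neg n hn a₀ u m h ih =>
    constructor
    · intro k a
      rw [comm_dd D k n a a₀ u]
      exact Submodule.add_mem _
        (Submodule.add_mem _ (stable_neg D b hn a₀ _ (ih.1 k a))
          (Submodule.smul_mem _ _ (ih.1 (k + n) (a * a₀))))
        (Submodule.smul_mem _ _ (ih.2 (a * a₀)))
    · intro a
      rw [comm_cop_d D n a₀ a u]
      exact stable_neg D b hn a₀ _ (ih.2 a)
  | cen a₀ u m h ih =>
    constructor
    · intro k a
      rw [← comm_cop_d D k a a₀ u]
      exact stable_cen D b a₀ _ (ih.1 k a)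
    · intro a
      rw [comm_cop_cop D a₀ a u]
      exact stable_cen D b a₀ _ (ih.2 a)

lemma U0_invariant (D : HWRep B W) {b : B} (hφ : ∀ a ∈ Ideal.span {b}, D.φd a = 0) :
    ActInvariant (fun x => D.ρ x) (U0 D b) := by
  have hd : ∀ (k : ℤ) (a : B), ∀ v ∈ U0 D b, dop D k a v ∈ U0 D b := by
    intro k a
    have : U0 D b ≤ Submodule.comap (dop D k a) (U0 D b) := by
      rw [U0, Submodule.span_le]
      rintro u ⟨m, hu⟩
      exact (mon_inv D hφ hu).1 k a
    exact fun v hv => this hv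
  have hc : ∀ (a : B), ∀ v ∈ U0 D b, cop D a v ∈ U0 D b := by
    intro a
    have : U0 D b ≤ Submodule.comap (cop D a) (U0 D b) := by
      rw [U0, Submodule.span_le]
      rintro u ⟨m, hu⟩
      exact (mon_inv D hφ hu).2 a
    exact fun v hv => this hv
  have hf : ∀ (f : ℤ →₀ B), ∀ v ∈ U0 D b, D.ρ (f, (0 : B)) v ∈ U0 D b := by
    intro f
    induction f using Finsupp.induction with
    | zero =>
      intro v hv
      rw [show ((0 : ℤ →₀ B), (0 : B)) = (0 : LVir B) from rfl, map_zero]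
      exact Submodule.zero_mem _
    | single_add k a f hk hane ih =>
      intro v hv
      have e : ((Finsupp.single k a + f : ℤ →₀ B), (0 : B))
          = ((Finsupp.single k a, 0) : LVir B) + ((f, 0) : LVir B) := by
        simp [Prod.ext_iff]
      rw [e, map_add, LinearMap.add_apply]
      exact Submodule.add_mem _ (hd k a v hv) (ih v hv)
  intro x v hv
  have hx : (x : LVir B) = ((x.1, 0) : LVir B) + ((0, x.2) : LVir B) := by
    simp [Prod.ext_iff]
  show D.ρ x v ∈ U0 D b
  rw [hx, map_add, LinearMap.add_apply]
  exact Submodule.add_mem _ (hf x.1 v hv) (hc x.2 v hv)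

end Aux

/-- Under the hypotheses `α ± β ∉ ℤ`, `ψ(b) ≠ 0` and `φ|_{d_0 ⊗ ⟨b⟩} = 0`, the highest
weight vector `v_φ` of `V(φ)` satisfies `(d_{-1} ⊗ b) · v_φ = 0`. -/
theorem dminus1_kills_hv {W : Type*} [AddCommGroup W] [Module ℂ W]
    (D : HWRep B W) (α β : ℂ) (hα0 : 0 ≤ α.re) (hα1 : α.re < 1) (hβ : β ≠ 1)
    (hαβ : ∀ z : ℤ, α + β ≠ (z : ℂ)) (hαβ' : ∀ z : ℤ, α - β ≠ (z : ℂ))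
    (ψ : B →ₐ[ℂ] ℂ) (b : B) (hψb : ψ b ≠ 0)
    (hφ : ∀ a ∈ Ideal.span {b}, D.φd a = 0) :
    D.ρ (Finsupp.single (-1 : ℤ) b, 0) D.hv = 0 := by
  classical
  have hb : b ∈ Ideal.span ({b} : Set B) := Ideal.subset_span rfl
  have hwmem : dop D (-1) b D.hv ∈ U0 D b := Submodule.subset_span ⟨-1, IsMon.base b hb⟩
  rcases D.irr (U0 D b) (U0_invariant D hφ) with h | h
  · rw [h] at hwmem
    simpa [dop] using (Submodule.mem_bot ℂ).mp hwmem
  · exfalso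
    set T := dop D 0 1 with hT
    have hhv : D.hv ∈ Module.End.eigenspace T (D.φd 1) := by
      rw [Module.End.mem_eigenspace_iff]
      exact D.wt0 1
    have hle : U0 D b ≤ ⨆ (μ : ℂ) (_ : μ ≠ D.φd 1), Module.End.eigenspace T μ := by
      rw [U0, Submodule.span_le]
      rintro u ⟨m, hu⟩
      have h1 : T u = (D.φd 1 + (m : ℂ)) • u := hu.eig
      have h2 : (D.φd 1 + (m : ℂ)) ≠ D.φd 1 := by
        intro hcon
        have hm0 : (m : ℂ) = 0 := by
          have := hcon.trans (add_zero (D.φd 1)).symm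
          exact add_left_cancel this
        have hm : m = 0 := by exact_mod_cast hm0
        have := hu.m_neg
        omega
      refine Submodule.mem_iSup_of_mem (D.φd 1 + (m : ℂ)) ?_
      refine Submodule.mem_iSup_of_mem h2 ?_
      rw [Module.End.mem_eigenspace_iff]
      exact h1
    have hdisj := (Module.End.eigenspaces_iSupIndep T) (D.φd 1)
    have hmem2 : D.hv ∈ ⨆ (μ : ℂ) (_ : μ ≠ D.φd 1), Module.End.eigenspace T μ := by
      apply hle
      rw [h]
      exact Submodule.mem_top
    have hz : D.hv = 0 := Submodule.disjoint_def.mp hdisj D.hv hhv hmem2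
    exact D.hv_ne hz
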